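/- Patching lemma: Let R be an algebraic complete idealic semiring, and s, s₁, …, sₙ compact elements with s = s₁ + ⋯ + sₙ (join). Write R_t for the localization of R at the multiplicative system {tᵏ}, i.e., the quotient by the congruence generated by (1, t). If f_i ∈ R_{s_i} satisfy f_i = f_j in R_{s_i s_j} for all i, j, then there exists a unique f ∈ R_s with f = f_i in R_{s_i} for all i. -/

import Mathlib

open CompleteLattice

/-- A congruence relation on a complete semiring: an equivalence relation compatible
with arbitrary suprema and with multiplication. -/
def IsCong {R : Type*} [CompleteLattice R] [Mul R] (r : R → R → Prop) : Prop :=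
  Equivalence r ∧
  (∀ S : Set (R × R), (∀ p ∈ S, r p.1 p.2) →
    r (sSup (Prod.fst '' S)) (sSup (Prod.snd '' S))) ∧
  (∀ a b c d : R, r a b → r c d → r (a * c) (b * d))

/-- The congruence relation generated by a set of pairs. -/
def congCl {R : Type*} [CompleteLattice R] [Mul R] (s : Set (R × R)) (a b : R) : Prop :=
  ∀ r : R → R → Prop, IsCong r → (∀ p ∈ s, r p.1 p.2) → r a b

/-- The congruence defining the localization `R_t` of `R` at `{tᵏ}`: the congruence
generated by the single pair `(1, t)`.  Two elements of `R` become equal in `R_t`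
iff they are related by this congruence. -/
def locRel {R : Type*} [CompleteLattice R] [Mul R] [One R] (t : R) (a b : R) : Prop :=
  congCl {((1 : R), t)} a b


section Aux

variable {R : Type*} [CompleteLattice R] [CommMonoid R]

theorem aux_mul_sup (hdist : ∀ (a : R) (S : Set R), a * sSup S = ⨆ b ∈ S, a * b)
    (c a b : R) : c * (a ⊔ b) = c * a ⊔ c * b := by
  have h := hdist c {a, b}
  rw [sSup_pair] at h
  rw [h, iSup_pair]

theorem aux_mul_bot (hdist : ∀ (a : R) (S : Set R), a * sSup S = ⨆ b ∈ S, a * b)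
    (c : R) : c * (⊥ : R) = ⊥ := by
  have h := hdist c ∅
  simpa using h

theorem aux_mul_iSup {ι : Sort*} (hdist : ∀ (a : R) (S : Set R), a * sSup S = ⨆ b ∈ S, a * b)
    (c : R) (g : ι → R) : c * (⨆ i, g i) = ⨆ i, c * g i := by
  rw [iSup, hdist, iSup_range]

theorem aux_mul_mono_right (hdist : ∀ (a : R) (S : Set R), a * sSup S = ⨆ b ∈ S, a * b)
    {a b : R} (c : R) (h : a ≤ b) : c * a ≤ c * b := by
  have : c * b = c * a ⊔ c * b := by
    rw [← aux_mul_sup hdist, sup_eq_right.mpr h]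
  rw [this]; exact le_sup_left

theorem aux_mul_mono_left (hdist : ∀ (a : R) (S : Set R), a * sSup S = ⨆ b ∈ S, a * b)
    {a b : R} (c : R) (h : a ≤ b) : a * c ≤ b * c := by
  rw [mul_comm a c, mul_comm b c]; exact aux_mul_mono_right hdist c h

theorem aux_le_one (h1 : (1 : R) = ⊤) (a : R) : a ≤ 1 := h1 ▸ le_top

theorem aux_mul_le_left (hdist : ∀ (a : R) (S : Set R), a * sSup S = ⨆ b ∈ S, a * b)
    (h1 : (1 : R) = ⊤) (a b : R) : a * b ≤ a := by
  have := aux_mul_mono_right hdist a (aux_le_one h1 b)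
  simpa using this

theorem aux_mul_le_right (hdist : ∀ (a : R) (S : Set R), a * sSup S = ⨆ b ∈ S, a * b)
    (h1 : (1 : R) = ⊤) (a b : R) : a * b ≤ b := by
  rw [mul_comm]; exact aux_mul_le_left hdist h1 b a

theorem aux_mul_le_mul (hdist : ∀ (a : R) (S : Set R), a * sSup S = ⨆ b ∈ S, a * b)
    {a b c d : R} (hab : a ≤ b) (hcd : c ≤ d) : a * c ≤ b * d :=
  le_trans (aux_mul_mono_left hdist c hab) (aux_mul_mono_right hdist b hcd)

theorem aux_pow_anti (hdist : ∀ (a : R) (S : Set R), a * sSup S = ⨆ b ∈ S, a * b)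
    (h1 : (1 : R) = ⊤) (t : R) {k m : ℕ} (h : k ≤ m) : t ^ m ≤ t ^ k := by
  obtain ⟨d, rfl⟩ := Nat.exists_eq_add_of_le h
  rw [pow_add]
  exact aux_mul_le_left hdist h1 _ _

theorem aux_pow_compact (htop : IsCompactElement (1 : R))
    (hmulcpt : ∀ a b : R, IsCompactElement a → IsCompactElement b → IsCompactElement (a * b))
    {t : R} (ht : IsCompactElement t) (k : ℕ) : IsCompactElement (t ^ k) := by
  induction k with
  | zero => simpa using htop
  | succ k ih => rw [pow_succ]; exact hmulcpt _ _ ih ht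

/-- Key finiteness lemma: if `x` is compact, `x ≤ sSup Y`, and each `y ∈ Y` satisfies
`∃ k, t^k * y ≤ b`, then `∃ k, t^k * x ≤ b`. -/
theorem aux_key (hdist : ∀ (a : R) (S : Set R), a * sSup S = ⨆ b ∈ S, a * b)
    (h1 : (1 : R) = ⊤) {t b : R} {Y : Set R}
    (hY : ∀ y ∈ Y, ∃ k, t ^ k * y ≤ b) {x : R}
    (hx : IsCompactElement x) (hxle : x ≤ sSup Y) : ∃ k, t ^ k * x ≤ b := by
  obtain ⟨F, hFY, hxF⟩ := (isCompactElement_iff_exists_le_sSup_of_le_sSup (k := x)).mp hx Y hxle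
  classical
  have main : ∀ F : Finset R, ↑F ⊆ Y → ∃ k, t ^ k * F.sup id ≤ b := by
    intro F
    induction F using Finset.induction_on with
    | empty =>
      intro _
      exact ⟨0, by simpa [aux_mul_bot hdist] using (bot_le : (⊥:R) ≤ b)⟩
    | insert _ _ hnot ih =>
      rename_i y F'
      intro hsub
      have hy : y ∈ Y := hsub (Finset.mem_insert_self y F')
      obtain ⟨k1, hk1⟩ := hY y hy
      obtain ⟨k2, hk2⟩ := ih (fun z hz => hsub (Finset.mem_insert_of_mem hz))
      refine ⟨k1 + k2, ?_⟩
      rw [Finset.sup_insert]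
      rw [aux_mul_sup hdist]
      apply sup_le
      · exact le_trans (aux_mul_mono_left hdist _
          (aux_pow_anti hdist h1 t (Nat.le_add_right k1 k2))) hk1
      · exact le_trans (aux_mul_mono_left hdist _
          (aux_pow_anti hdist h1 t (Nat.le_add_left k2 k1))) hk2
  obtain ⟨k, hk⟩ := main F hFY
  exact ⟨k, le_trans (aux_mul_mono_right hdist _ hxF) hk⟩

/-- The explicit description of the localization congruence at a compact `t`. -/
def Erel (t a b : R) : Prop :=
  (∀ x : R, IsCompactElement x → x ≤ a → ∃ k, t ^ k * x ≤ b) ∧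
  (∀ x : R, IsCompactElement x → x ≤ b → ∃ k, t ^ k * x ≤ a)

theorem Erel_refl (t a : R) : Erel t a a :=
  ⟨fun x _ hx => ⟨0, by simpa using hx⟩, fun x _ hx => ⟨0, by simpa using hx⟩⟩

theorem Erel_symm {t a b : R} (h : Erel t a b) : Erel t b a := ⟨h.2, h.1⟩

theorem Erel_trans (hdist : ∀ (a : R) (S : Set R), a * sSup S = ⨆ b ∈ S, a * b)
    (h1 : (1 : R) = ⊤)
    (halg : ∀ a : R, a = sSup {x : R | IsCompactElement x ∧ x ≤ a})
    (htop : IsCompactElement (1 : R))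
    (hmulcpt : ∀ a b : R, IsCompactElement a → IsCompactElement b → IsCompactElement (a * b))
    {t : R} (ht : IsCompactElement t) {a b c : R}
    (hab : Erel t a b) (hbc : Erel t b c) : Erel t a c := by
  have dir : ∀ u v w : R,
      (∀ x : R, IsCompactElement x → x ≤ u → ∃ k, t ^ k * x ≤ v) →
      (∀ x : R, IsCompactElement x → x ≤ v → ∃ k, t ^ k * x ≤ w) →
      (∀ x : R, IsCompactElement x → x ≤ u → ∃ k, t ^ k * x ≤ w) := by
    intro u v w huv hvw x hx hxu
    obtain ⟨k, hk⟩ := huv x hx hxu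
    have hcpt : IsCompactElement (t ^ k * x) :=
      hmulcpt _ _ (aux_pow_compact htop hmulcpt ht k) hx
    have hle : t ^ k * x ≤ sSup {y : R | IsCompactElement y ∧ y ≤ v} := by
      rw [← halg v]; exact hk
    obtain ⟨m, hm⟩ := aux_key hdist h1 (t := t) (b := w)
      (fun y hy => hvw y hy.1 hy.2) hcpt hle
    exact ⟨m + k, by rwa [pow_add, mul_assoc]⟩
  exact ⟨dir a b c hab.1 hbc.1, dir c b a hbc.2 hab.2⟩

theorem Erel_sup (hdist : ∀ (a : R) (S : Set R), a * sSup S = ⨆ b ∈ S, a * b)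
    (h1 : (1 : R) = ⊤)
    (halg : ∀ a : R, a = sSup {x : R | IsCompactElement x ∧ x ≤ a})
    (t : R) (S : Set (R × R)) (hS : ∀ p ∈ S, Erel t p.1 p.2) :
    Erel t (sSup (Prod.fst '' S)) (sSup (Prod.snd '' S)) := by
  have dir : ∀ (fst snd : R × R → R),
      (∀ p ∈ S, ∀ x : R, IsCompactElement x → x ≤ fst p → ∃ k, t ^ k * x ≤ snd p) →
      (∀ x : R, IsCompactElement x → x ≤ sSup (fst '' S) → ∃ k, t ^ k * x ≤ sSup (snd '' S)) := by
    intro fst snd hp x hx hxle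
    set Y : Set R := {y : R | ∃ p ∈ S, IsCompactElement y ∧ y ≤ fst p} with hY
    have hle : x ≤ sSup Y := by
      refine le_trans hxle (sSup_le ?_)
      rintro z ⟨p, hpS, rfl⟩
      calc fst p = sSup {y : R | IsCompactElement y ∧ y ≤ fst p} := halg _
        _ ≤ sSup Y := sSup_le_sSup (fun y hy => ⟨p, hpS, hy.1, hy.2⟩)
    refine aux_key hdist h1 ?_ hx hle
    rintro y ⟨p, hpS, hyc, hyle⟩
    obtain ⟨k, hk⟩ := hp p hpS y hyc hyle
    exact ⟨k, le_trans hk (le_sSup ⟨p, hpS, rfl⟩)⟩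
  constructor
  · exact dir Prod.fst Prod.snd (fun p hp => (hS p hp).1)
  · exact dir Prod.snd Prod.fst (fun p hp => (hS p hp).2)

theorem Erel_mul (hdist : ∀ (a : R) (S : Set R), a * sSup S = ⨆ b ∈ S, a * b)
    (h1 : (1 : R) = ⊤)
    (halg : ∀ a : R, a = sSup {x : R | IsCompactElement x ∧ x ≤ a})
    (t : R) {a b c d : R} (hab : Erel t a b) (hcd : Erel t c d) :
    Erel t (a * c) (b * d) := by
  have dir : ∀ u v w z : R,
      (∀ x : R, IsCompactElement x → x ≤ u → ∃ k, t ^ k * x ≤ v) →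
      (∀ x : R, IsCompactElement x → x ≤ w → ∃ k, t ^ k * x ≤ z) →
      (∀ x : R, IsCompactElement x → x ≤ u * w → ∃ k, t ^ k * x ≤ v * z) := by
    intro u v w z huv hwz x hx hxle
    set Y : Set R := {e : R | ∃ y z', IsCompactElement y ∧ y ≤ u ∧
      IsCompactElement z' ∧ z' ≤ w ∧ e = y * z'} with hYdef
    have hle : x ≤ sSup Y := by
      refine le_trans hxle ?_
      calc u * w = u * sSup {z' : R | IsCompactElement z' ∧ z' ≤ w} := by rw [← halg w]
        _ = ⨆ z' ∈ {z' : R | IsCompactElement z' ∧ z' ≤ w}, u * z' := hdist _ _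
        _ ≤ sSup Y := by
            refine iSup₂_le ?_
            intro z' hz'
            rw [mul_comm]
            calc z' * u = z' * sSup {y : R | IsCompactElement y ∧ y ≤ u} := by rw [← halg u]
              _ = ⨆ y ∈ {y : R | IsCompactElement y ∧ y ≤ u}, z' * y := hdist _ _
              _ ≤ sSup Y := by
                  refine iSup₂_le ?_
                  intro y hy
                  exact le_sSup ⟨y, z', hy.1, hy.2, hz'.1, hz'.2, (mul_comm z' y)⟩
    refine aux_key hdist h1 ?_ hx hle
    rintro e ⟨y, z', hyc, hyu, hzc, hzw, rfl⟩
    obtain ⟨k, hk⟩ := huv y hyc hyu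
    obtain ⟨m, hm⟩ := hwz z' hzc hzw
    refine ⟨k + m, ?_⟩
    have heq : t ^ (k + m) * (y * z') = (t ^ k * y) * (t ^ m * z') := by
      rw [pow_add]; rw [mul_mul_mul_comm]
    rw [heq]
    exact aux_mul_le_mul hdist hk hm
  exact ⟨dir a b c d hab.1 hcd.1, dir b a d c hab.2 hcd.2⟩

theorem Erel_one (hdist : ∀ (a : R) (S : Set R), a * sSup S = ⨆ b ∈ S, a * b)
    (h1 : (1 : R) = ⊤) (t : R) : Erel t 1 t := by
  constructor
  · intro x hx hxle
    refine ⟨1, ?_⟩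
    rw [pow_one]
    calc t * x ≤ t * 1 := aux_mul_mono_right hdist t (aux_le_one h1 x)
      _ = t := mul_one t
  · intro x hx hxle
    exact ⟨0, by simpa using aux_le_one h1 x⟩

theorem IsCong_Erel (hdist : ∀ (a : R) (S : Set R), a * sSup S = ⨆ b ∈ S, a * b)
    (h1 : (1 : R) = ⊤)
    (halg : ∀ a : R, a = sSup {x : R | IsCompactElement x ∧ x ≤ a})
    (htop : IsCompactElement (1 : R))
    (hmulcpt : ∀ a b : R, IsCompactElement a → IsCompactElement b → IsCompactElement (a * b))
    {t : R} (ht : IsCompactElement t) : IsCong (Erel (R := R) t) := by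
  refine ⟨⟨Erel_refl t, Erel_symm, Erel_trans hdist h1 halg htop hmulcpt ht⟩, ?_, ?_⟩
  · exact Erel_sup hdist h1 halg t
  · exact fun a b c d hab hcd => Erel_mul hdist h1 halg t hab hcd

theorem locRel_to_Erel (hdist : ∀ (a : R) (S : Set R), a * sSup S = ⨆ b ∈ S, a * b)
    (h1 : (1 : R) = ⊤)
    (halg : ∀ a : R, a = sSup {x : R | IsCompactElement x ∧ x ≤ a})
    (htop : IsCompactElement (1 : R))
    (hmulcpt : ∀ a b : R, IsCompactElement a → IsCompactElement b → IsCompactElement (a * b))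
    {t : R} (ht : IsCompactElement t) {a b : R} (h : locRel t a b) : Erel t a b := by
  refine h (Erel t) (IsCong_Erel hdist h1 halg htop hmulcpt ht) ?_
  rintro p hp
  rw [Set.mem_singleton_iff] at hp
  subst hp
  exact Erel_one hdist h1 t

/-- Inside any congruence containing `(1,t)`, `a` is related to `t^k * a`. -/
theorem cong_pow_mul {t : R} {r : R → R → Prop} (hr : IsCong r) (h1t : r 1 t) (k : ℕ) (a : R) :
    r a (t ^ k * a) := by
  induction k with
  | zero => simpa using hr.1.refl a
  | succ k ih =>
    have h2 := hr.2.2 1 t (t ^ k * a) (t ^ k * a) h1t (hr.1.refl _)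
    rw [one_mul] at h2
    have : t * (t ^ k * a) = t ^ (k + 1) * a := by
      rw [pow_succ, mul_comm (t ^ k) t, mul_assoc]
    rw [this] at h2
    exact hr.1.trans ih h2


/-- Half of `Erel → locRel`: if every compact below `b` is carried below `a` by a power
of `t`, then `a ⊔ b` and `a` are identified in `R_t`. -/
theorem locRel_sup_absorb (hdist : ∀ (a : R) (S : Set R), a * sSup S = ⨆ b ∈ S, a * b)
    (halg : ∀ a : R, a = sSup {x : R | IsCompactElement x ∧ x ≤ a})
    {t a b : R} (hE : ∀ y : R, IsCompactElement y → y ≤ b → ∃ k, t ^ k * y ≤ a) :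
    locRel t (a ⊔ b) a := by
  intro r hr hgen
  have h1t : r 1 t := hgen ((1 : R), t) rfl
  set S : Set (R × R) := insert (a, a)
    {p : R × R | ∃ y k, IsCompactElement y ∧ y ≤ b ∧ t ^ k * y ≤ a ∧ p = (y, t ^ k * y)}
    with hSdef
  have hrel : ∀ p ∈ S, r p.1 p.2 := by
    rintro p hp
    rcases hp with rfl | ⟨y, k, hyc, hyb, hka, rfl⟩
    · exact hr.1.refl a
    · exact cong_pow_mul hr h1t k y
  have hmain := hr.2.1 S hrel
  have hfst : sSup (Prod.fst '' S) = a ⊔ b := by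
    apply le_antisymm
    · apply _root_.sSup_le
      rintro z ⟨p, hp, rfl⟩
      rcases hp with rfl | ⟨y, k, hyc, hyb, hka, rfl⟩
      · exact le_sup_left
      · exact le_trans hyb le_sup_right
    · apply sup_le
      · exact le_sSup ⟨(a, a), Set.mem_insert _ _, rfl⟩
      · conv_lhs => rw [halg b]
        apply _root_.sSup_le
        rintro y ⟨hyc, hyb⟩
        obtain ⟨k, hk⟩ := hE y hyc hyb
        exact le_sSup ⟨(y, t ^ k * y), Set.mem_insert_of_mem _ ⟨y, k, hyc, hyb, hk, rfl⟩, rfl⟩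
  have hsnd : sSup (Prod.snd '' S) = a := by
    apply le_antisymm
    · apply _root_.sSup_le
      rintro z ⟨p, hp, rfl⟩
      rcases hp with rfl | ⟨y, k, hyc, hyb, hka, rfl⟩
      · exact le_refl a
      · exact hka
    · exact le_sSup ⟨(a, a), Set.mem_insert _ _, rfl⟩
  rw [hfst, hsnd] at hmain
  exact hmain

theorem Erel_to_locRel (hdist : ∀ (a : R) (S : Set R), a * sSup S = ⨆ b ∈ S, a * b)
    (halg : ∀ a : R, a = sSup {x : R | IsCompactElement x ∧ x ≤ a})
    {t a b : R} (h : Erel t a b) : locRel t a b := by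
  intro r hr hgen
  have h1 : locRel t (b ⊔ a) b := locRel_sup_absorb hdist halg h.1
  have h2 : locRel t (a ⊔ b) a := locRel_sup_absorb hdist halg h.2
  rw [sup_comm] at h1
  exact hr.1.trans (hr.1.symm (h2 r hr hgen)) (h1 r hr hgen)

/-- Binomial pigeonhole: `(a ⊔ b)^(2K) ≤ a^K ⊔ b^K` in an idealic semiring. -/
theorem aux_binom (hdist : ∀ (a : R) (S : Set R), a * sSup S = ⨆ b ∈ S, a * b)
    (h1 : (1 : R) = ⊤) (a b : R) (K : ℕ) : (a ⊔ b) ^ (2 * K) ≤ a ^ K ⊔ b ^ K := by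
  have mul_finset_sup : ∀ (c : R) (F : Finset ℕ) (g : ℕ → R),
      c * F.sup g = F.sup (fun p => c * g p) := by
    classical
    intro c F g
    induction F using Finset.induction_on with
    | empty => simpa using aux_mul_bot hdist c
    | insert _ _ hnot ih =>
      rename_i p F'
      rw [Finset.sup_insert, Finset.sup_insert, aux_mul_sup hdist, ih]
  have step : ∀ m : ℕ, (a ⊔ b) ^ m ≤
      (Finset.range (m + 1)).sup (fun p => a ^ p * b ^ (m - p)) := by
    intro m
    induction m with
    | zero => simp
    | succ m ih =>
      rw [pow_succ]
      calc (a ⊔ b) ^ m * (a ⊔ b)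
          ≤ (Finset.range (m + 1)).sup (fun p => a ^ p * b ^ (m - p)) * (a ⊔ b) :=
            aux_mul_mono_left hdist _ ih
        _ = (a ⊔ b) * (Finset.range (m + 1)).sup (fun p => a ^ p * b ^ (m - p)) := mul_comm _ _
        _ = (Finset.range (m + 1)).sup (fun p => (a ⊔ b) * (a ^ p * b ^ (m - p))) :=
            mul_finset_sup _ _ _
        _ ≤ (Finset.range (m + 2)).sup (fun p => a ^ p * b ^ (m + 1 - p)) := by
            apply Finset.sup_le
            intro p hp
            rw [Finset.mem_range] at hp
            have hpm : p ≤ m := Nat.lt_succ_iff.mp hp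
            rw [mul_comm (a ⊔ b), aux_mul_sup hdist]
            apply sup_le
            · have he : a ^ p * b ^ (m - p) * a = a ^ (p + 1) * b ^ (m + 1 - (p + 1)) := by
                rw [Nat.succ_sub_succ, pow_succ, mul_right_comm]
              rw [he]
              exact Finset.le_sup (f := fun p => a ^ p * b ^ (m + 1 - p))
                (Finset.mem_range.mpr (by omega))
            · have he : a ^ p * b ^ (m - p) * b = a ^ p * b ^ (m + 1 - p) := by
                rw [Nat.succ_sub hpm, pow_succ, mul_assoc]
              rw [he]
              exact Finset.le_sup (f := fun p => a ^ p * b ^ (m + 1 - p))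
                (Finset.mem_range.mpr (by omega))
  calc (a ⊔ b) ^ (2 * K)
      ≤ (Finset.range (2 * K + 1)).sup (fun p => a ^ p * b ^ (2 * K - p)) := step _
    _ ≤ a ^ K ⊔ b ^ K := by
        apply Finset.sup_le
        intro p hp
        rw [Finset.mem_range] at hp
        rcases le_or_gt K p with h | h
        · calc a ^ p * b ^ (2 * K - p) ≤ a ^ p := aux_mul_le_left hdist h1 _ _
            _ ≤ a ^ K := aux_pow_anti hdist h1 a h
            _ ≤ a ^ K ⊔ b ^ K := le_sup_left
        · calc a ^ p * b ^ (2 * K - p) ≤ b ^ (2 * K - p) := aux_mul_le_right hdist h1 _ _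
            _ ≤ b ^ K := aux_pow_anti hdist h1 b (by omega)
            _ ≤ a ^ K ⊔ b ^ K := le_sup_right

/-- Pigeonhole: a big enough power of a finite join is below the join of `K`-th powers. -/
theorem aux_pigeon (hdist : ∀ (a : R) (S : Set R), a * sSup S = ⨆ b ∈ S, a * b)
    (h1 : (1 : R) = ⊤) :
    ∀ (n : ℕ) (si : Fin n → R) (K : ℕ), ∃ m, (⨆ i, si i) ^ m ≤ ⨆ i, (si i) ^ K := by
  intro n
  induction n with
  | zero =>
    intro si K
    refine ⟨1, ?_⟩
    rw [pow_one]
    simp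
  | succ n ih =>
    intro si K
    obtain ⟨m1, hm1⟩ := ih (fun i => si i.succ) K
    set A := si 0 with hA
    set B := ⨆ i : Fin n, si i.succ with hB
    have hsplit : (⨆ i, si i) = A ⊔ B := by
      apply le_antisymm
      · apply iSup_le
        intro i
        induction i using Fin.cases with
        | zero => exact le_sup_left
        | succ j => exact le_trans (le_iSup (fun i : Fin n => si i.succ) j) le_sup_right
      · apply sup_le (le_iSup si 0)
        apply iSup_le
        intro j
        exact le_iSup si j.succ
    set M := max K m1 with hM
    refine ⟨2 * M, ?_⟩
    rw [hsplit]
    calc (A ⊔ B) ^ (2 * M) ≤ A ^ M ⊔ B ^ M := aux_binom hdist h1 A B M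
      _ ≤ ⨆ i, (si i) ^ K := by
          apply sup_le
          · calc A ^ M ≤ A ^ K := aux_pow_anti hdist h1 A (le_max_left _ _)
              _ ≤ ⨆ i, (si i) ^ K := le_iSup (fun i => (si i) ^ K) 0
          · calc B ^ M ≤ B ^ m1 := aux_pow_anti hdist h1 B (le_max_right _ _)
              _ ≤ ⨆ i : Fin n, (si i.succ) ^ K := hm1
              _ ≤ ⨆ i, (si i) ^ K := by
                  apply iSup_le
                  intro j
                  exact le_iSup (fun i => (si i) ^ K) j.succ

/-- If `a,b` are `Erel`-related at each `si i`, they are related at the join. -/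
theorem Erel_iSup (hdist : ∀ (a : R) (S : Set R), a * sSup S = ⨆ b ∈ S, a * b)
    (h1 : (1 : R) = ⊤) {n : ℕ} {si : Fin n → R} {a b : R}
    (h : ∀ i, Erel (si i) a b) : Erel (⨆ i, si i) a b := by
  have dir : ∀ u v : R, (∀ i, ∀ x : R, IsCompactElement x → x ≤ u → ∃ k, (si i) ^ k * x ≤ v) →
      ∀ x : R, IsCompactElement x → x ≤ u → ∃ k, (⨆ i, si i) ^ k * x ≤ v := by
    intro u v hp x hx hxle
    choose kk hkk using fun i => hp i x hx hxle
    set K := Finset.univ.sup kk with hK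
    have hallK : ∀ i, (si i) ^ K * x ≤ v := by
      intro i
      refine le_trans (aux_mul_mono_left hdist x
        (aux_pow_anti hdist h1 (si i) (Finset.le_sup (Finset.mem_univ i)))) (hkk i)
    obtain ⟨m, hm⟩ := aux_pigeon hdist h1 n si K
    refine ⟨m, ?_⟩
    calc (⨆ i, si i) ^ m * x ≤ (⨆ i, (si i) ^ K) * x := aux_mul_mono_left hdist x hm
      _ = ⨆ i, (si i) ^ K * x := by
          rw [mul_comm, aux_mul_iSup hdist]
          exact iSup_congr (fun i => mul_comm _ _)
      _ ≤ v := iSup_le hallK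
  exact ⟨dir a b (fun i => (h i).1), dir b a (fun i => (h i).2)⟩

end Aux

/-- patching lemma: Let `R` be an algebraic complete idealic semiring and
`s, s₁, …, sₙ` compact elements with `s = s₁ ⊔ ⋯ ⊔ sₙ`.  If elements `fᵢ ∈ R_{sᵢ}`
(given by representatives `f i : R`) satisfy `fᵢ = fⱼ` in `R_{sᵢsⱼ}`, then there is an
`f ∈ R_s` (a representative `g : R`) with `f = fᵢ` in `R_{sᵢ}` for all `i`, and it is
unique as an element of `R_s`. -/
theorem stmt18 {R : Type*} [CompleteLattice R] [CommMonoid R]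
    (hdist : ∀ (a : R) (S : Set R), a * sSup S = ⨆ b ∈ S, a * b)
    (h1 : (1 : R) = ⊤)
    (halg : ∀ a : R, a = sSup {x : R | IsCompactElement x ∧ x ≤ a})
    (htop : IsCompactElement (1 : R))
    (hmulcpt : ∀ a b : R, IsCompactElement a → IsCompactElement b → IsCompactElement (a * b))
    (n : ℕ) (s : R) (si : Fin n → R)
    (hs : s = ⨆ i, si i)
    (hscpt : IsCompactElement s) (hsicpt : ∀ i, IsCompactElement (si i))
    (f : Fin n → R)
    (hglue : ∀ i j, locRel (si i * si j) (f i) (f j)) :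
    ∃ g : R, (∀ i, locRel (si i) g (f i)) ∧
      ∀ g' : R, (∀ i, locRel (si i) g' (f i)) → locRel s g' g := by
  classical
  set nu : Fin n → R := fun i =>
    sSup {x : R | IsCompactElement x ∧ ∃ k, (si i) ^ k * x ≤ f i} with hnu
  set g : R := ⨅ i, nu i with hg
  have hEg : ∀ i, Erel (si i) g (f i) := by
    intro i
    constructor
    · intro x hx hxle
      have hle : x ≤ nu i := le_trans hxle (iInf_le nu i)
      exact aux_key hdist h1 (fun y hy => hy.2) hx hle
    · intro x hx hxle
      have hj : ∀ j, ∃ k, (si i) ^ k * x ≤ nu j := by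
        intro j
        have hE := locRel_to_Erel hdist h1 halg htop hmulcpt
          (hmulcpt _ _ (hsicpt i) (hsicpt j)) (hglue i j)
        obtain ⟨k, hk⟩ := hE.1 x hx hxle
        refine ⟨k, le_sSup ⟨hmulcpt _ _ (aux_pow_compact htop hmulcpt (hsicpt i) k) hx,
          k, ?_⟩⟩
        have heq : (si j) ^ k * ((si i) ^ k * x) = (si i * si j) ^ k * x := by
          rw [mul_pow, ← mul_assoc, mul_comm ((si j) ^ k)]
        rw [heq]
        exact hk
      choose kk hkk using hj
      set K := Finset.univ.sup kk with hK
      refine ⟨K, le_iInf fun j => ?_⟩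
      exact le_trans (aux_mul_mono_left hdist x
        (aux_pow_anti hdist h1 _ (Finset.le_sup (Finset.mem_univ j)))) (hkk j)
  refine ⟨g, fun i => Erel_to_locRel hdist halg (hEg i), ?_⟩
  intro g' hg'
  have hE' : ∀ i, Erel (si i) g' g := fun i =>
    Erel_trans hdist h1 halg htop hmulcpt (hsicpt i)
      (locRel_to_Erel hdist h1 halg htop hmulcpt (hsicpt i) (hg' i))
      (Erel_symm (hEg i))
  have hfin := Erel_iSup hdist h1 hE'
  rw [← hs] at hfin
  exact Erel_to_locRel hdist halg hfin
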